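/- Suppose rank(Σ_{l=1}^L B_l) = K and let Ω_sum = Σ_{l=1}^L Ω_l = Θ Z (Σ_{l=1}^L B_l) Z^T Θ. Let U ∈ R^{n×K} be a matrix with orthonormal columns whose columns are eigenvectors of Ω_sum corresponding to its K nonzero eigenvalues (compact eigendecomposition Ω_sum = U Σ U^T). Then every row of U is nonzero, and the row-normalized matrix U_* defined by U_*(i,:) = U(i,:)/‖U(i,:)‖_F satisfies U_* = Z X for some invertible K×K matrix X, and ‖X(k,:) − X(k̃,:)‖_F = √2 for all 1 ≤ k < k̃ ≤ K. -/

import Mathlib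

open Matrix MeasureTheory ProbabilityTheory
open scoped BigOperators ENNReal

noncomputable section

/-- Euclidean norm of a finite real vector. -/
def vecNorm {m : ℕ} (v : Fin m → ℝ) : ℝ := Real.sqrt (∑ i, v i ^ 2)

/-- Frobenius norm of a real matrix. -/
def frobNorm {m p : ℕ} (M : Matrix (Fin m) (Fin p) ℝ) : ℝ :=
  Real.sqrt (∑ i, ∑ j, M i j ^ 2)

/-- Spectral norm (ℓ² operator norm) of a real matrix. -/
def specNorm {m p : ℕ} (M : Matrix (Fin m) (Fin p) ℝ) : ℝ :=
  sSup ((fun x => vecNorm (M.mulVec x)) '' {x : Fin p → ℝ | vecNorm x ≤ 1})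

open Classical in
/-- The k-th largest (1-indexed) eigenvalue in magnitude of a real symmetric matrix
(`0` if the matrix is not Hermitian). -/
def kthAbsEig {m : ℕ} (M : Matrix (Fin m) (Fin m) ℝ) (k : ℕ) : ℝ :=
  if hM : M.IsHermitian then
    (((Finset.univ : Finset (Fin m)).val.map fun i => |hM.eigenvalues i|).sort (· ≤ ·)).getD
      (m - k) 0
  else 0

/-- `Z` is a community membership matrix: 0/1 entries, exactly one 1 per row,
every column nonzero. -/
def IsMembership {n K : ℕ} (Z : Matrix (Fin n) (Fin K) ℝ) : Prop :=
  (∀ i k, Z i k = 0 ∨ Z i k = 1) ∧ (∀ i, ∑ k, Z i k = 1) ∧ (∀ k, ∃ i, Z i k = 1)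

/-- The MLDCSBM model hypotheses on the parameters `Z`, `θ`, `B`. -/
def MLDCSBM {n L K : ℕ} (Z : Matrix (Fin n) (Fin K) ℝ) (θ : Fin n → ℝ)
    (B : Fin L → Matrix (Fin K) (Fin K) ℝ) : Prop :=
  IsMembership Z ∧ (∀ i, 0 < θ i ∧ θ i ≤ 1) ∧
    (∀ l, (B l).IsSymm ∧ ∀ a b, 0 ≤ B l a b ∧ B l a b ≤ 1)

/-- Ω_l = Θ Z B_l Zᵀ Θ. -/
def OmegaL {n K : ℕ} (θ : Fin n → ℝ) (Z : Matrix (Fin n) (Fin K) ℝ)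
    (Bl : Matrix (Fin K) (Fin K) ℝ) : Matrix (Fin n) (Fin n) ℝ :=
  Matrix.diagonal θ * Z * Bl * Zᵀ * Matrix.diagonal θ

def thetaMin {n : ℕ} (θ : Fin n → ℝ) : ℝ := sInf (Set.range θ)
def thetaMax {n : ℕ} (θ : Fin n → ℝ) : ℝ := sSup (Set.range θ)

/-- Minimum community size. -/
def nMin {n K : ℕ} (Z : Matrix (Fin n) (Fin K) ℝ) : ℝ :=
  sInf (Set.range fun k : Fin K => ∑ i, Z i k)

/-- Maximum community size. -/
def nMax {n K : ℕ} (Z : Matrix (Fin n) (Fin K) ℝ) : ℝ :=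
  sSup (Set.range fun k : Fin K => ∑ i, Z i k)

/-- Column `k` of a matrix, as a vector. -/
def colVec {n K : ℕ} (U : Matrix (Fin n) (Fin K) ℝ) (k : Fin K) : Fin n → ℝ := fun i => U i k

/-- Row-normalized version of a matrix: each row divided by its Euclidean norm. -/
def rowNormalize {n K : ℕ} (U : Matrix (Fin n) (Fin K) ℝ) : Matrix (Fin n) (Fin K) ℝ :=
  fun i k => U i k / vecNorm (fun j => U i j)

/-- Diagonal degree matrix of a square matrix. -/
def degDiag {n : ℕ} (M : Matrix (Fin n) (Fin n) ℝ) : Matrix (Fin n) (Fin n) ℝ :=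
  Matrix.diagonal fun i => ∑ j, M i j

theorem stmt0 {n L K : ℕ} (hn : 0 < n) (hL : 0 < L) (hK : 0 < K) (hKn : K ≤ n)
    (Z : Matrix (Fin n) (Fin K) ℝ) (θ : Fin n → ℝ)
    (B : Fin L → Matrix (Fin K) (Fin K) ℝ)
    (hmodel : MLDCSBM Z θ B)
    (hrank : (∑ l, B l).rank = K)
    (U : Matrix (Fin n) (Fin K) ℝ)
    (hUorth : Uᵀ * U = 1)
    (hUeig : ∀ k, ∃ μ : ℝ, μ ≠ 0 ∧
      (∑ l, OmegaL θ Z (B l)).mulVec (colVec U k) = μ • colVec U k) :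
    (∀ i, U i ≠ 0) ∧
    ∃ X : Matrix (Fin K) (Fin K) ℝ, X.det ≠ 0 ∧ rowNormalize U = Z * X ∧
      ∀ k k' : Fin K, k ≠ k' → vecNorm (fun j => X k j - X k' j) = Real.sqrt 2 := by
  classical
  obtain ⟨⟨hZ01, hZrow, hZcol⟩, hθ, hB⟩ := hmodel
  -- community assignment map ℓ
  have hexu : ∀ i, ∃ k, Z i k = 1 := by
    intro i
    by_contra h
    push_neg at h
    have h0 : ∑ k, Z i k = 0 :=
      Finset.sum_eq_zero (fun k _ => (hZ01 i k).resolve_right (h k))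
    rw [hZrow i] at h0; norm_num at h0
  choose ℓ hℓ using hexu
  have huniq : ∀ i k, Z i k = 1 → k = ℓ i := by
    intro i k hk
    by_contra hne
    have h2 : (2 : ℝ) ≤ ∑ k', Z i k' := by
      have hp : ∑ k' ∈ ({k, ℓ i} : Finset (Fin K)), Z i k' = 2 := by
        rw [Finset.sum_pair hne, hk, hℓ i]; norm_num
      calc (2 : ℝ) = ∑ k' ∈ ({k, ℓ i} : Finset (Fin K)), Z i k' := hp.symm
        _ ≤ ∑ k', Z i k' := Finset.sum_le_sum_of_subset_of_nonneg (Finset.subset_univ _)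
            (fun j _ _ => by rcases hZ01 i j with h | h <;> simp [h])
    rw [hZrow i] at h2; norm_num at h2
  have hZind : ∀ i k, Z i k = if k = ℓ i then 1 else 0 := by
    intro i k
    by_cases h : k = ℓ i
    · simp [h, hℓ]
    · simp only [h, if_false]
      rcases hZ01 i k with h0 | h1
      · exact h0
      · exact absurd (huniq i k h1) h
  set D := Matrix.diagonal θ with hD
  set Bsum := ∑ l, B l with hBsumdef
  -- the summed Omega
  have hΩ : (∑ l, OmegaL θ Z (B l)) = D * Z * (Bsum * Zᵀ * D) := by
    simp only [OmegaL, Matrix.mul_assoc, ← hD]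
    rw [← Matrix.mul_sum, ← Matrix.mul_sum, ← Matrix.sum_mul, ← hBsumdef]
  choose μ hμ hμeig using hUeig
  set M := Bsum * Zᵀ * D with hM
  set Y : Matrix (Fin K) (Fin K) ℝ :=
    fun c k => (μ k)⁻¹ * (M.mulVec (colVec U k)) c with hY
  have hDZmul : ∀ (v : Fin K → ℝ) (i : Fin n), (D * Z).mulVec v i = θ i * v (ℓ i) := by
    intro v i
    have : ∀ j, (D * Z) i j = θ i * Z i j := by
      intro j; rw [hD, Matrix.diagonal_mul]
    simp only [Matrix.mulVec, dotProduct, this, hZind]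
    rw [Finset.sum_congr rfl (fun j _ => by
      rw [show θ i * (if j = ℓ i then (1:ℝ) else 0) * v j
          = (if j = ℓ i then θ i * v j else 0) by split <;> simp [*]])]
    simp
  have hUY : ∀ i k, U i k = θ i * Y (ℓ i) k := by
    intro i k
    have h1 : (D * Z * M).mulVec (colVec U k) = μ k • colVec U k := by
      rw [← hΩ]; exact hμeig k
    have h2 : (D * Z).mulVec (M.mulVec (colVec U k)) = μ k • colVec U k := by
      rw [Matrix.mulVec_mulVec]; exact h1
    have h3 := congrFun h2 i
    rw [hDZmul] at h3
    have h4 : θ i * (M.mulVec (colVec U k)) (ℓ i) = μ k * U i k := by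
      rw [h3]; simp [colVec]
    have h5 : θ i * Y (ℓ i) k = (μ k)⁻¹ * (θ i * (M.mulVec (colVec U k)) (ℓ i)) := by
      simp only [hY]; ring
    rw [h5, h4, ← mul_assoc, inv_mul_cancel₀ (hμ k), one_mul]
  -- fiber weights
  set d : Fin K → ℝ := fun c => ∑ i ∈ Finset.univ.filter (fun i => ℓ i = c), θ i ^ 2
    with hd_def
  have hd : ∀ c, 0 < d c := by
    intro c
    obtain ⟨i, hi⟩ := hZcol c
    have hic : ℓ i = c := (huniq i c hi).symm
    have hmem : i ∈ Finset.univ.filter (fun i => ℓ i = c) := by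
      simp [hic]
    have hle : θ i ^ 2 ≤ d c :=
      Finset.single_le_sum (f := fun i => θ i ^ 2)
        (fun j _ => sq_nonneg _) hmem
    have : 0 < θ i ^ 2 := pow_pos (hθ i).1 2
    linarith
  -- orthonormality in terms of Y
  have horth : ∀ k k', ∑ c, d c * (Y c k * Y c k') = if k = k' then 1 else 0 := by
    intro k k'
    have h1 := congrFun (congrFun hUorth k) k'
    have h2 : ∑ i, U i k * U i k' = if k = k' then 1 else 0 := by
      simpa [Matrix.mul_apply, Matrix.transpose_apply, Matrix.one_apply] using h1
    rw [← h2]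
    have h3 : ∀ i, U i k * U i k' = θ i ^ 2 * (Y (ℓ i) k * Y (ℓ i) k') := by
      intro i; rw [hUY i k, hUY i k']; ring
    rw [Finset.sum_congr rfl (fun i _ => h3 i)]
    rw [← Finset.sum_fiberwise Finset.univ ℓ (fun i => θ i ^ 2 * (Y (ℓ i) k * Y (ℓ i) k'))]
    apply Finset.sum_congr rfl
    intro c _
    rw [hd_def, Finset.sum_mul]
    apply Finset.sum_congr rfl
    intro i hi
    have : ℓ i = c := by simpa using hi
    rw [this]
  set Q : Matrix (Fin K) (Fin K) ℝ := fun c k => Real.sqrt (d c) * Y c k with hQdef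
  have hsq : ∀ c, Real.sqrt (d c) * Real.sqrt (d c) = d c :=
    fun c => Real.mul_self_sqrt (hd c).le
  have hsqpos : ∀ c, 0 < Real.sqrt (d c) := fun c => Real.sqrt_pos.mpr (hd c)
  have hQtQ : Qᵀ * Q = 1 := by
    ext k k'
    simp only [Matrix.mul_apply, Matrix.transpose_apply, Matrix.one_apply]
    rw [← horth k k']
    apply Finset.sum_congr rfl
    intro c _
    calc Q c k * Q c k' = (Real.sqrt (d c) * Real.sqrt (d c)) * (Y c k * Y c k') := by
          rw [hQdef]; ring
      _ = d c * (Y c k * Y c k') := by rw [hsq c]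
  have hQQt : Q * Qᵀ = 1 := mul_eq_one_comm.mp hQtQ
  have hQrow : ∀ c c', ∑ j, Q c j * Q c' j = if c = c' then 1 else 0 := by
    intro c c'
    have h1 := congrFun (congrFun hQQt c) c'
    simpa [Matrix.mul_apply, Matrix.transpose_apply, Matrix.one_apply] using h1
  -- sum of squares of Y rows
  have hYrow : ∀ c, ∑ j, Y c j ^ 2 = 1 / d c := by
    intro c
    have h1 : ∑ j, Q c j * Q c j = 1 := by rw [hQrow c c]; simp
    have h2 : ∀ j, Q c j * Q c j = d c * Y c j ^ 2 := by
      intro j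
      calc Q c j * Q c j = (Real.sqrt (d c) * Real.sqrt (d c)) * Y c j ^ 2 := by
            rw [hQdef]; ring
        _ = d c * Y c j ^ 2 := by rw [hsq c]
    rw [Finset.sum_congr rfl (fun j _ => h2 j), ← Finset.mul_sum] at h1
    rw [eq_div_iff (hd c).ne']
    linarith [h1]
  -- row norms of U
  have hUnorm : ∀ i, vecNorm (fun j => U i j) = θ i / Real.sqrt (d (ℓ i)) := by
    intro i
    have h1 : ∑ j, U i j ^ 2 = θ i ^ 2 * (1 / d (ℓ i)) := by
      rw [← hYrow (ℓ i), Finset.mul_sum]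
      apply Finset.sum_congr rfl
      intro j _
      rw [hUY i j]; ring
    have h2 : θ i ^ 2 * (1 / d (ℓ i)) = (θ i / Real.sqrt (d (ℓ i))) ^ 2 := by
      rw [div_pow, Real.sq_sqrt (hd (ℓ i)).le]
      ring
    rw [vecNorm, h1, h2, Real.sqrt_sq (div_nonneg (hθ i).1.le (Real.sqrt_nonneg _))]
  have hθne : ∀ i, θ i ≠ 0 := fun i => (hθ i).1.ne'
  have hUrowne : ∀ i, U i ≠ 0 := by
    intro i hiz
    have h1 : ∀ k, Y (ℓ i) k = 0 := by
      intro k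
      have : U i k = 0 := congrFun hiz k
      rw [hUY i k] at this
      exact (mul_eq_zero.mp this).resolve_left (hθne i)
    have h2 : ∑ j, Q (ℓ i) j * Q (ℓ i) j = 1 := by rw [hQrow]; simp
    have h3 : ∑ j, Q (ℓ i) j * Q (ℓ i) j = 0 := by
      apply Finset.sum_eq_zero
      intro j _
      rw [hQdef]
      simp [h1 j]
    rw [h3] at h2; norm_num at h2
  refine ⟨hUrowne, Q, ?_, ?_, ?_⟩
  · -- det Q ≠ 0
    intro hdet
    have h1 : Q.det * Qᵀ.det = 1 := by rw [← Matrix.det_mul, hQQt, Matrix.det_one]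
    rw [hdet] at h1; norm_num at h1
  · -- rowNormalize U = Z * Q
    funext i k
    have h1 : rowNormalize U i k = U i k / vecNorm (fun j => U i j) := rfl
    rw [h1, hUnorm i, hUY i k]
    have h2 : (Z * Q) i k = Q (ℓ i) k := by
      simp only [Matrix.mul_apply, hZind]
      rw [Finset.sum_congr rfl (fun c _ => by
        rw [show (if c = ℓ i then (1:ℝ) else 0) * Q c k
            = (if c = ℓ i then Q c k else 0) by split <;> simp [*]])]
      simp
    rw [h2, hQdef]
    have hs := (hsqpos (ℓ i)).ne'
    field_simp [hθne i]
  · -- pairwise distances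
    intro k k' hkk'
    have h1 : ∑ j, (Q k j - Q k' j) ^ 2 = 2 := by
      have hc : ∀ j, (Q k j - Q k' j) ^ 2
          = Q k j * Q k j + Q k' j * Q k' j - 2 * (Q k j * Q k' j) := by
        intro j; ring
      rw [Finset.sum_congr rfl (fun j _ => hc j), Finset.sum_sub_distrib,
        Finset.sum_add_distrib, ← Finset.mul_sum, hQrow k k, hQrow k' k', hQrow k k']
      simp only [hkk', if_true, if_false, if_neg hkk']
      norm_num
    rw [vecNorm, h1]

end
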